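/- Let α ∈ [0,1), kScore ∈ ℝ, and let S, M ⊆ K be keyword sets with S ∩ M ≠ ∅, nonnegative subscription weights wt_s and message weights wt_m with wt_m(w) ≤ 1 for all w, and spatial similarity SSim ≤ 1. Define the loose textual threshold λ_T = kScore/(1−α) − α/(1−α). If wtsum_s(w) < λ_T for every common keyword w ∈ S ∩ M (i.e., the loose prefix pref(s) = {w ∈ S : wtsum_s(w) ≥ λ_T} shares no keyword with M), then TSim(S,M) < λ_T and hence α·SSim + (1−α)·TSim(S,M) < kScore, so the message cannot be a top-k candidate of the subscription. Therefore it is correct to distribute each subscription s only to the subscription bolts whose keyword sets intersect pref(s) and each message only to the bolts whose keyword sets intersect M. (Correctness of prefix-based distribution; Lemma 7.) -/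

import Mathlib

open Finset

/-- Textual similarity: `TSim(S,M) = Σ_{w ∈ S ∩ M} wt_s(w)·wt_m(w)`. -/
noncomputable def TSim {K : Type*} [LinearOrder K]
    (S M : Finset K) (wts wtm : K → ℝ) : ℝ :=
  ∑ w ∈ S ∩ M, wts w * wtm w

/-- `wtsum_s(w) = Σ_{w' ∈ S, w ≤ w'} wt_s(w')`. -/
noncomputable def wtsum {K : Type*} [LinearOrder K]
    (S : Finset K) (wts : K → ℝ) (w : K) : ℝ :=
  ∑ w' ∈ S.filter (fun w' => w ≤ w'), wts w'

/-- `maxwt_s(w) = max_{w' ∈ S, w ≤ w'} wt_s(w')`, taken to be `0` if no such `w'` exists. -/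
noncomputable def maxwt {K : Type*} [LinearOrder K]
    (S : Finset K) (wts : K → ℝ) (w : K) : ℝ :=
  (S.filter (fun w' => w ≤ w')).fold max 0 wts

/-- Lemma 7 (correctness of prefix-based distribution): with the loose textual
threshold `λ_T = kScore/(1−α) − α/(1−α)`, if every common keyword `w` of `S` and `M`
has `wtsum_s(w) < λ_T` (i.e. the loose prefix of `s` shares no keyword with `M`),
then `TSim(S,M) < λ_T` and hence `α·SSim + (1−α)·TSim(S,M) < kScore`, so the message
cannot be a top-k candidate of the subscription. -/
theorem prefix_based_distribution_correctness {K : Type*} [LinearOrder K]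
    (S M : Finset K) (wts wtm : K → ℝ)
    (hne : (S ∩ M).Nonempty)
    (hs : ∀ w, 0 ≤ wts w) (hm0 : ∀ w, 0 ≤ wtm w) (hm1 : ∀ w, wtm w ≤ 1)
    (α kScore SSim : ℝ)
    (hα0 : 0 ≤ α) (hα1 : α < 1) (hSSim : SSim ≤ 1)
    (h : ∀ w ∈ S ∩ M, wtsum S wts w < kScore / (1 - α) - α / (1 - α)) :
    TSim S M wts wtm < kScore / (1 - α) - α / (1 - α) ∧
      α * SSim + (1 - α) * TSim S M wts wtm < kScore := by
  set lam := kScore / (1 - α) - α / (1 - α) with hlam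
  set w0 := (S ∩ M).min' hne with hw0def
  have hw0 : w0 ∈ S ∩ M := (S ∩ M).min'_mem hne
  have hT : TSim S M wts wtm < lam := by
    calc TSim S M wts wtm ≤ ∑ w ∈ S ∩ M, wts w := by
          apply Finset.sum_le_sum
          intro w _
          calc wts w * wtm w ≤ wts w * 1 := by
                exact mul_le_mul_of_nonneg_left (hm1 w) (hs w)
            _ = wts w := mul_one _
      _ ≤ wtsum S wts w0 := by
          apply Finset.sum_le_sum_of_subset_of_nonneg
          · intro w hw
            simp only [Finset.mem_filter]
            exact ⟨(Finset.mem_inter.mp hw).1, (S ∩ M).min'_le w hw⟩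
          · intro w _ _; exact hs w
      _ < lam := h w0 hw0
  refine ⟨hT, ?_⟩
  have h1 : (0:ℝ) < 1 - α := by linarith
  have h2 : (1 - α) * TSim S M wts wtm < (1 - α) * lam := by
    exact mul_lt_mul_of_pos_left hT h1
  have h3 : (1 - α) * lam = kScore - α := by
    rw [hlam]; field_simp [h1.ne']
  nlinarith [mul_le_mul_of_nonneg_left hSSim hα0]
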